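/- For any integer l, the graded ring ℤ[x,y]/(x² - l·xy, y²) with deg x = deg y = 4 is isomorphic as a graded ring to ℤ[x,y]/(x², y²) if l is even, and to ℤ[x,y]/(x² - xy, y²) if l is odd. -/

import Mathlib

open MvPolynomial

/-- The ideal `(x² - l·xy, y²)` in `ℤ[x,y]`. -/
noncomputable def gkmIdeal (l : ℤ) : Ideal (MvPolynomial (Fin 2) ℤ) :=
  Ideal.span {X 0 ^ 2 - C l * (X 0 * X 1), X 1 ^ 2}

/-- The ring `ℤ[x,y]/(x² - l·xy, y²)`, graded with `deg x = deg y = 4`. -/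
abbrev GKMRing (l : ℤ) := MvPolynomial (Fin 2) ℤ ⧸ gkmIdeal l

/-- The degree-4 part of `GKMRing l`: the span of the images of `x` and `y`. -/
noncomputable def deg4 (l : ℤ) : Submodule ℤ (GKMRing l) :=
  Submodule.span ℤ {Ideal.Quotient.mk (gkmIdeal l) (X 0), Ideal.Quotient.mk (gkmIdeal l) (X 1)}

/-- A graded ring isomorphism `GKMRing l ≃ GKMRing l'`: a ring isomorphism preserving
the degree-4 parts (with `deg x = deg y = 4`, this forces preservation of all degrees). -/
def GKMGradedIso (l l' : ℤ) : Prop :=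
  ∃ e : GKMRing l ≃+* GKMRing l',
    (∀ p ∈ deg4 l, e p ∈ deg4 l') ∧ (∀ p ∈ deg4 l', e.symm p ∈ deg4 l)

/-- `ℤ[x,y]/(x² - l·xy, y²)` is isomorphic as a graded ring to `ℤ[x,y]/(x², y²)`
if `l` is even, and to `ℤ[x,y]/(x² - xy, y²)` if `l` is odd. -/
lemma C_eq_cast (m : ℤ) : (C m : MvPolynomial (Fin 2) ℤ) = (m : MvPolynomial (Fin 2) ℤ) :=
  eq_intCast (C : ℤ →+* MvPolynomial (Fin 2) ℤ) m

lemma key_mem (l l' k : ℤ) (h : l = l' + 2*k) :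
    (X 0 + (k : MvPolynomial (Fin 2) ℤ) * X 1)^2
      - (l : MvPolynomial (Fin 2) ℤ) * ((X 0 + (k : MvPolynomial (Fin 2) ℤ) * X 1) * X 1)
      ∈ gkmIdeal l' := by
  subst h
  rw [gkmIdeal, Ideal.mem_span_pair]
  refine ⟨1, - (k : MvPolynomial (Fin 2) ℤ) ^ 2 - (l' : MvPolynomial (Fin 2) ℤ) * k, ?_⟩
  rw [C_eq_cast]
  push_cast
  ring

noncomputable def gkmHom (l l' k : ℤ) (h : l = l' + 2*k) : GKMRing l →ₐ[ℤ] GKMRing l' :=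
  Ideal.Quotient.liftₐ (gkmIdeal l)
    ((Ideal.Quotient.mkₐ ℤ (gkmIdeal l')).comp
      (aeval ![X 0 + (k : MvPolynomial (Fin 2) ℤ) * X 1, X 1]))
    (by
      intro a ha
      have hsub : gkmIdeal l ≤ RingHom.ker ((Ideal.Quotient.mkₐ ℤ (gkmIdeal l')).comp
          (aeval ![X 0 + (k : MvPolynomial (Fin 2) ℤ) * X 1, X 1])).toRingHom := by
        rw [gkmIdeal, Ideal.span_le]
        rintro p (rfl | rfl) <;>
          simp only [SetLike.mem_coe, RingHom.mem_ker, AlgHom.toRingHom_eq_coe,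
            RingHom.coe_coe, AlgHom.coe_comp, Function.comp_apply, map_sub, map_pow, map_mul,
            map_intCast, aeval_X, C_eq_cast, Matrix.cons_val_zero, Matrix.cons_val_one,
            Matrix.head_cons, Ideal.Quotient.mkₐ_eq_mk]
        · rw [← map_pow, ← map_mul, ← map_intCast (Ideal.Quotient.mk (gkmIdeal l')) l,
            ← map_mul, ← map_sub, Ideal.Quotient.eq_zero_iff_mem]
          exact key_mem l l' k h
        · rw [← map_pow, Ideal.Quotient.eq_zero_iff_mem]
          exact Ideal.subset_span (Or.inr rfl)
      exact hsub ha)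

lemma gkmHom_mk_X0 (l l' k : ℤ) (h : l = l' + 2*k) :
    gkmHom l l' k h (Ideal.Quotient.mk (gkmIdeal l) (X 0))
      = Ideal.Quotient.mk (gkmIdeal l') (X 0)
        + k • Ideal.Quotient.mk (gkmIdeal l') (X 1) := by
  simp [gkmHom, Ideal.Quotient.liftₐ_apply, Ideal.Quotient.lift_mk, zsmul_eq_mul]
  erw [Ideal.Quotient.lift_mk]
  simp

lemma gkmHom_mk_X1 (l l' k : ℤ) (h : l = l' + 2*k) :
    gkmHom l l' k h (Ideal.Quotient.mk (gkmIdeal l) (X 1))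
      = Ideal.Quotient.mk (gkmIdeal l') (X 1) := by
  simp [gkmHom, Ideal.Quotient.liftₐ_apply, Ideal.Quotient.lift_mk]
  erw [Ideal.Quotient.lift_mk]
  simp

lemma gkmHom_comp (l l' k j : ℤ) (h : l = l' + 2*k) (h' : l' = l + 2*j) :
    (gkmHom l' l j h').comp (gkmHom l l' k h) = AlgHom.id ℤ (GKMRing l) := by
  obtain rfl : j = -k := by omega
  apply Ideal.Quotient.algHom_ext
  apply MvPolynomial.algHom_ext
  intro i
  fin_cases i <;>
    simp [gkmHom, Ideal.Quotient.liftₐ_apply, Ideal.Quotient.lift_mk, map_add, map_mul] <;>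
    erw [Ideal.Quotient.lift_mk] <;> simp <;> erw [Ideal.Quotient.lift_mk] <;> simp


lemma gkmHom_maps_deg4 (l l' k : ℤ) (h : l = l' + 2*k) :
    ∀ p ∈ deg4 l, gkmHom l l' k h p ∈ deg4 l' := by
  intro p hp
  induction hp using Submodule.span_induction with
  | mem x hx =>
    rcases hx with rfl | rfl
    · rw [gkmHom_mk_X0 l l' k h]
      exact add_mem (Submodule.subset_span (Or.inl rfl))
        (Submodule.smul_mem _ _ (Submodule.subset_span (Or.inr rfl)))
    · rw [gkmHom_mk_X1 l l' k h]
      exact Submodule.subset_span (Or.inr rfl)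
  | zero => simp
  | add x y _ _ hx hy => rw [map_add]; exact add_mem hx hy
  | smul a x _ hx => rw [map_smul]; exact Submodule.smul_mem _ _ hx

lemma gkm_iso (l l' k : ℤ) (h : l = l' + 2*k) : GKMGradedIso l l' := by
  have h' : l' = l + 2*(-k) := by omega
  refine ⟨(AlgEquiv.ofAlgHom (gkmHom l l' k h) (gkmHom l' l (-k) h')
      (gkmHom_comp l' l (-k) k h' h) (gkmHom_comp l l' k (-k) h h')).toRingEquiv,
    gkmHom_maps_deg4 l l' k h, gkmHom_maps_deg4 l' l (-k) h'⟩


theorem stmt10 (l : ℤ) :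
    (Even l → GKMGradedIso l 0) ∧ (Odd l → GKMGradedIso l 1) := by
  constructor
  · rintro ⟨m, rfl⟩
    exact gkm_iso _ 0 m (by ring)
  · rintro ⟨m, rfl⟩
    exact gkm_iso _ 1 m (by ring)
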